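/- Let p, q, r, γ, h₂ : ℝ → ℝ be smooth 1-periodic functions with γ′′ − γ = (1/2)(q − r) − p′ on ℝ. Set w := γ − γ′ − r and suppose h₂′ + h₂ = 2r·(−(1/2)(r + q) − r′ + p′) − w² − 2r′w + r² + 2rq − 2rp′ + p² + 2r′p on ℝ. Then ∫₀¹ h₂(x) dx = ∫₀¹ (p(x)² − γ(x)² − γ′(x)²) dx. -/

import Mathlib

open MeasureTheory

theorem integral_h2_eq_H2 (p q r γ h₂ : ℝ → ℝ)
    (hp : ContDiff ℝ (⊤ : ℕ∞) p) (hq : ContDiff ℝ (⊤ : ℕ∞) q)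
    (hr : ContDiff ℝ (⊤ : ℕ∞) r) (hγ : ContDiff ℝ (⊤ : ℕ∞) γ)
    (hh₂ : ContDiff ℝ (⊤ : ℕ∞) h₂)
    (hpper : Function.Periodic p 1) (hqper : Function.Periodic q 1)
    (hrper : Function.Periodic r 1) (hγper : Function.Periodic γ 1)
    (hh₂per : Function.Periodic h₂ 1)
    (hγeq : ∀ x, deriv (deriv γ) x - γ x = (1/2) * (q x - r x) - deriv p x)
    (w : ℝ → ℝ) (hw : w = fun x => γ x - deriv γ x - r x)
    (hode : ∀ x, deriv h₂ x + h₂ x =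
      2 * r x * (-(1/2) * (r x + q x) - deriv r x + deriv p x)
        - w x ^ 2 - 2 * deriv r x * w x
        + r x ^ 2 + 2 * r x * q x - 2 * r x * deriv p x + p x ^ 2
        + 2 * deriv r x * p x) :
    (∫ x in (0:ℝ)..1, h₂ x) =
      ∫ x in (0:ℝ)..1, (p x ^ 2 - γ x ^ 2 - (deriv γ x) ^ 2) := by
  subst hw
  -- smoothness of derivatives
  have hγ' : ContDiff ℝ (⊤ : ℕ∞) (deriv γ) := (contDiff_infty_iff_deriv.mp hγ).2
  have hr' : ContDiff ℝ (⊤ : ℕ∞) (deriv r) := (contDiff_infty_iff_deriv.mp hr).2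
  have hp' : ContDiff ℝ (⊤ : ℕ∞) (deriv p) := (contDiff_infty_iff_deriv.mp hp).2
  have hγ'' : Continuous (deriv (deriv γ)) := hγ'.continuous_deriv (by exact_mod_cast le_top)
  have hdγ : Differentiable ℝ γ := hγ.differentiable (by simp)
  have hdγ' : Differentiable ℝ (deriv γ) := hγ'.differentiable (by simp)
  have hdr : Differentiable ℝ r := hr.differentiable (by simp)
  have hdp : Differentiable ℝ p := hp.differentiable (by simp)
  -- define D and its derivative
  set D : ℝ → ℝ := fun x => γ x ^ 2 + 2 * r x * deriv γ x - 2 * r x * γ x + 2 * r x * p x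
    with hD
  set dD : ℝ → ℝ := fun x => 2 * γ x * deriv γ x + 2 * deriv r x * deriv γ x
      + 2 * r x * deriv (deriv γ) x - 2 * deriv r x * γ x - 2 * r x * deriv γ x
      + 2 * deriv r x * p x + 2 * r x * deriv p x with hdD
  have hDderiv : ∀ x, HasDerivAt D (dD x) x := by
    intro x
    have h1 := (hdγ x).hasDerivAt
    have h2 := (hdγ' x).hasDerivAt
    have h3 := (hdr x).hasDerivAt
    have h4 := (hdp x).hasDerivAt
    have : HasDerivAt D
        (2 * γ x * deriv γ x + (2 * deriv r x * deriv γ x + 2 * r x * deriv (deriv γ) x)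
          - (2 * deriv r x * γ x + 2 * r x * deriv γ x)
          + (2 * deriv r x * p x + 2 * r x * deriv p x)) x := by
      have e1 : HasDerivAt (fun x => γ x ^ 2) (2 * γ x * deriv γ x) x := by
        exact ((h1.mul h1).congr_deriv (by ring)).congr_of_eventuallyEq (Filter.Eventually.of_forall fun y => show γ y ^ 2 = γ y * γ y from sq _)
      have e2 : HasDerivAt (fun x => 2 * r x * deriv γ x)
          (2 * deriv r x * deriv γ x + 2 * r x * deriv (deriv γ) x) x := by
        exact ((h3.const_mul 2).mul h2)
      have e3 : HasDerivAt (fun x => 2 * r x * γ x)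
          (2 * deriv r x * γ x + 2 * r x * deriv γ x) x := by
        exact ((h3.const_mul 2).mul h1)
      have e4 : HasDerivAt (fun x => 2 * r x * p x)
          (2 * deriv r x * p x + 2 * r x * deriv p x) x := by
        exact ((h3.const_mul 2).mul h4)
      exact ((e1.add e2).sub e3).add e4
    simpa [hdD] using this.congr_deriv (by ring)
  have hDdiff : Differentiable ℝ D := fun x => (hDderiv x).differentiableAt
  have hderivD : deriv D = dD := funext fun x => (hDderiv x).deriv
  -- pointwise identity
  have key : ∀ x, h₂ x = (p x ^ 2 - γ x ^ 2 - (deriv γ x) ^ 2) + (dD x - deriv h₂ x) := by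
    intro x
    have h := hode x
    have h2 := hγeq x
    simp only [hdD]
    linear_combination h - 2 * r x * h2
  -- continuity facts
  have hcγ := hγ.continuous
  have hcγ' := hγ'.continuous
  have hcr := hr.continuous
  have hcr' := hr'.continuous
  have hcp := hp.continuous
  have hcp' := hp'.continuous
  have hcontdD : Continuous dD := by
    simp only [hdD]
    exact (((((((continuous_const.mul hcγ).mul hcγ').add
      ((continuous_const.mul hcr').mul hcγ')).add
      ((continuous_const.mul hcr).mul hγ'')).sub
      ((continuous_const.mul hcr').mul hcγ)).sub
      ((continuous_const.mul hcr).mul hcγ')).add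
      ((continuous_const.mul hcr').mul hcp)).add
      ((continuous_const.mul hcr).mul hcp')
  have hcontdh : Continuous (deriv h₂) := hh₂.continuous_deriv (by exact_mod_cast le_top)
  have hint1 : IntervalIntegrable (fun x => p x ^ 2 - γ x ^ 2 - (deriv γ x) ^ 2)
      volume 0 1 :=
    (((hcp.pow 2).sub (hcγ.pow 2)).sub (hcγ'.pow 2)).intervalIntegrable 0 1
  have hint2 : IntervalIntegrable (fun x => dD x - deriv h₂ x) volume 0 1 :=
    (hcontdD.sub hcontdh).intervalIntegrable 0 1
  calc (∫ x in (0:ℝ)..1, h₂ x)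
      = ∫ x in (0:ℝ)..1, ((p x ^ 2 - γ x ^ 2 - (deriv γ x) ^ 2) + (dD x - deriv h₂ x)) := by
        refine intervalIntegral.integral_congr fun x _ => key x
    _ = (∫ x in (0:ℝ)..1, (p x ^ 2 - γ x ^ 2 - (deriv γ x) ^ 2))
        + ∫ x in (0:ℝ)..1, (dD x - deriv h₂ x) :=
        intervalIntegral.integral_add hint1 hint2
    _ = ∫ x in (0:ℝ)..1, (p x ^ 2 - γ x ^ 2 - (deriv γ x) ^ 2) := by
        have hI1 : (∫ x in (0:ℝ)..1, dD x) = D 1 - D 0 := by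
          rw [← hderivD]
          exact intervalIntegral.integral_deriv_eq_sub (fun x _ => hDdiff x)
            (by rw [hderivD]; exact hcontdD.intervalIntegrable 0 1)
        have hI2 : (∫ x in (0:ℝ)..1, deriv h₂ x) = h₂ 1 - h₂ 0 :=
          intervalIntegral.integral_deriv_eq_sub (fun x _ => hh₂.differentiable (by simp) x)
            (hcontdh.intervalIntegrable 0 1)
        have hDper : D 1 = D 0 := by
          simp only [hD]
          have hderγper : deriv γ 1 = deriv γ 0 := by
            have hfun : (fun x => γ (x + 1)) = γ := funext fun x => hγper x
            have h := deriv_comp_add_const γ 1 0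
            rw [hfun] at h
            simpa using h.symm
          rw [show (1:ℝ) = 0 + 1 from (zero_add 1).symm, hγper 0, hrper 0, hpper 0]
          rw [zero_add, hderγper]
        have hhper : h₂ 1 = h₂ 0 := by
          rw [show (1:ℝ) = 0 + 1 by ring, hh₂per 0]
        rw [intervalIntegral.integral_sub (hcontdD.intervalIntegrable 0 1)
          (hcontdh.intervalIntegrable 0 1), hI1, hI2, hDper, hhper]
        ring
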